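/- Let φ ∈ L²(𝕋,H²) be such that φ(λ) is an inner function for a.e. λ in the support E = {λ ∈ 𝕋 : φ(λ) ≠ 0} of φ. Then M = φ·L²(𝕋,H²) = {φg : g ∈ L²(𝕋,H²)} is a closed subspace of L²(𝕋,H²) reducing for the bilateral shift U, and its associated measurable range function satisfies J_M(λ) = φ(λ)·H² = {φ(λ)h : h ∈ H²} for a.e. λ ∈ 𝕋, where (φ(λ)h)(z) = φ(λ)(z)·h(z). -/

import Mathlib

noncomputable section

open MeasureTheory Complex Submodule
open scoped InnerProductSpace ENNReal ComplexConjugate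

set_option synthInstance.maxHeartbeats 1000000
set_option maxHeartbeats 1600000

namespace ShiftPaper

instance : Fact ((0:ℝ) < 1) := ⟨one_pos⟩

/-- The circle, modelled as `ℝ/ℤ`. -/
abbrev 𝕋 : Type := UnitAddCircle

/-- The normalized Haar (Lebesgue) probability measure on the circle. -/
abbrev μT : Measure 𝕋 := AddCircle.haarAddCircle

/-- The space `L²(𝕋, E)` of square-integrable `E`-valued functions on the circle. -/
abbrev L2 (E : Type*) [NormedAddCommGroup E] := Lp E 2 μT

lemma norm_fourier (n : ℤ) (t : 𝕋) : ‖fourier n t‖ = 1 := by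
  rw [fourier_apply, Circle.norm_coe]

section mulF

variable {E : Type*} [NormedAddCommGroup E] [NormedSpace ℂ E]

lemma memLp_mulF (n : ℤ) (f : L2 E) :
    MemLp (fun t => fourier n t • (f : 𝕋 → E) t) 2 μT := by
  refine MemLp.of_le (Lp.memLp f)
    (((fourier n).continuous.aestronglyMeasurable).smul (Lp.aestronglyMeasurable f)) ?_
  refine Filter.Eventually.of_forall fun t => ?_
  rw [norm_smul, norm_fourier, one_mul]

/-- Multiplication by `fourier n` (i.e. by `λ ↦ λⁿ`) as a bounded operator on `L²(𝕋, E)`.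
For `n = 1` this is the bilateral shift `U`; for general `n : ℤ` it is `Uⁿ`. -/
def mulF (n : ℤ) : L2 E →L[ℂ] L2 E :=
  LinearMap.mkContinuous
    { toFun := fun f => (memLp_mulF n f).toLp _
      map_add' := fun f g => by
        rw [← MemLp.toLp_add (memLp_mulF n f) (memLp_mulF n g)]
        refine MemLp.toLp_congr _ _ ?_
        filter_upwards [Lp.coeFn_add f g] with t ht
        simp only [ht, Pi.add_apply, smul_add]
      map_smul' := fun c f => by
        simp only [RingHom.id_apply]
        rw [← MemLp.toLp_const_smul c (memLp_mulF n f)]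
        refine MemLp.toLp_congr _ _ ?_
        filter_upwards [Lp.coeFn_smul c f] with t ht
        rw [ht]
        simp only [Pi.smul_apply]
        rw [smul_comm] }
    1
    (fun f => by
      simp only [LinearMap.coe_mk, AddHom.coe_mk, one_mul]
      rw [Lp.norm_toLp _ (memLp_mulF n f), Lp.norm_def]
      refine le_of_eq (congrArg ENNReal.toReal ?_)
      refine eLpNorm_congr_norm_ae ?_
      refine Filter.Eventually.of_forall fun t => ?_
      rw [norm_smul, norm_fourier, one_mul])

lemma coeFn_mulF (n : ℤ) (f : L2 E) :
    (mulF n f : 𝕋 → E) =ᵐ[μT] fun t => fourier n t • (f : 𝕋 → E) t :=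
  MemLp.coeFn_toLp (memLp_mulF n f)

end mulF

section HardySpace

variable (K : Type) [NormedAddCommGroup K] [InnerProductSpace ℂ K] [CompleteSpace K]

/-- The continuous function `t ↦ fourier n t • x`. -/
def fourierSmulCM (n : ℤ) (x : K) : C(𝕋, K) :=
  ⟨fun t => fourier n t • x, (fourier n).continuous.smul continuous_const⟩

/-- The element of `L²(𝕋, K)` given by `t ↦ fourier n t • x`. -/
def expVec (n : ℤ) (x : K) : L2 K := ContinuousMap.toLp 2 μT ℂ (fourierSmulCM K n x)

lemma coeFn_expVec (n : ℤ) (x : K) :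
    (expVec K n x : 𝕋 → K) =ᵐ[μT] fun t => fourier n t • x :=
  ContinuousMap.coeFn_toLp (𝕜 := ℂ) μT (fourierSmulCM K n x)

/-- The Hardy space `H²(𝕋, K)`, as the subspace of `L²(𝕋, K)` of functions all of whose
weak Fourier coefficients of negative index vanish (equivalently, all of whose coordinate
functions with respect to an orthonormal basis of `K` lie in the scalar Hardy space `H²`). -/
def Hardy : Submodule ℂ (L2 K) :=
  ⨅ (n : ℤ) (_ : n < 0) (x : K), LinearMap.ker (innerSL ℂ (expVec K n x) : L2 K →ₗ[ℂ] ℂ)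

lemma isClosed_Hardy : IsClosed ((Hardy K : Set (L2 K))) := by
  have h : (Hardy K : Set (L2 K)) = ⋂ (n : ℤ) (_ : n < 0) (x : K),
      (LinearMap.ker (innerSL ℂ (expVec K n x) : L2 K →ₗ[ℂ] ℂ) : Set (L2 K)) := by
    simp only [Hardy, Submodule.coe_iInf]
  rw [h]
  exact isClosed_iInter fun n => isClosed_iInter fun _ => isClosed_iInter fun x =>
    (ContinuousLinearMap.isClosed_ker _)

/-- The Hardy space `H²(𝕋, K)` as a Hilbert space in its own right. -/
abbrev H2 := ↥(Hardy K)

instance : CompleteSpace (H2 K) := (isClosed_Hardy K).completeSpace_coe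

end HardySpace


section Shift

variable (K : Type) [NormedAddCommGroup K] [InnerProductSpace ℂ K] [CompleteSpace K]

lemma inner_expVec_mulF (n : ℤ) (x : K) (f : L2 K) :
    (inner ℂ (expVec K n x) (mulF 1 f) : ℂ) = inner ℂ (expVec K (n - 1) x) f := by
  rw [MeasureTheory.L2.inner_def, MeasureTheory.L2.inner_def]
  refine integral_congr_ae ?_
  filter_upwards [coeFn_mulF 1 f, coeFn_expVec K n x, coeFn_expVec K (n-1) x] with t h1 h2 h3
  rw [h1, h2, h3, inner_smul_left, inner_smul_left, inner_smul_right,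
    ← fourier_neg, ← fourier_neg, ← mul_assoc, ← fourier_add]
  have h : -n + 1 = -(n - 1) := by ring
  rw [h]

lemma mulF_mem_hardy {f : L2 K} (hf : f ∈ Hardy K) : mulF 1 f ∈ Hardy K := by
  simp only [Hardy, Submodule.mem_iInf, LinearMap.mem_ker, ContinuousLinearMap.coe_coe, innerSL_apply_apply] at hf ⊢
  intro n hn x
  rw [inner_expVec_mulF]
  exact hf (n - 1) (by omega) x

/-- The unilateral shift `S` on the Hardy space `H²(𝕋, K)`: the restriction of the
bilateral shift (multiplication by the variable) to the Hardy space. -/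
def S : H2 K →L[ℂ] H2 K where
  toLinearMap := (mulF (E := K) 1).toLinearMap.restrict
    (p := Hardy K) (q := Hardy K) (fun _ hx => mulF_mem_hardy K hx)
  cont := by
    apply Continuous.subtype_mk
    exact (mulF (E := K) 1).continuous.comp continuous_subtype_val

/-- The operator `Ŝ` on `L²(𝕋, H²(𝕋,K))`, acting pointwisely (on the values) as the
unilateral shift `S`. -/
def Shat : L2 (H2 K) →L[ℂ] L2 (H2 K) := (S K).compLpL 2 μT

lemma integral_fourier_eq_zero {m : ℤ} (hm : m ≠ 0) :
    ∫ t : 𝕋, fourier m t ∂μT = 0 := by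
  have h0 : ((0:ℤ)) ≠ m := fun h => hm h.symm
  have h : (inner ℂ (fourierLp (T := 1) 2 (0:ℤ)) (fourierLp 2 m) : ℂ) = 0 :=
    orthonormal_fourier.2 h0
  rw [MeasureTheory.L2.inner_def] at h
  rw [← h]
  refine integral_congr_ae ?_
  filter_upwards [coeFn_fourierLp 2 (0:ℤ), coeFn_fourierLp 2 m] with t h1 h2
  rw [h1, h2]
  simp [fourier_zero]

lemma const_mem_hardy (x : K) : expVec K 0 x ∈ Hardy K := by
  simp only [Hardy, Submodule.mem_iInf, LinearMap.mem_ker, ContinuousLinearMap.coe_coe, innerSL_apply_apply]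
  intro n hn y
  rw [MeasureTheory.L2.inner_def]
  have h : ∀ᵐ t ∂μT, (inner ℂ ((expVec K n y : 𝕋 → K) t) ((expVec K 0 x : 𝕋 → K) t) : ℂ)
      = fourier (-n) t * (inner ℂ y x : ℂ) := by
    filter_upwards [coeFn_expVec K n y, coeFn_expVec K 0 x] with t h1 h2
    rw [h1, h2, inner_smul_left, inner_smul_right, ← fourier_neg, fourier_zero, one_mul]
  rw [integral_congr_ae h, integral_mul_const,
    integral_fourier_eq_zero (by omega), zero_mul]

/-- The linear embedding of `K` into `H²(𝕋,K)` as constant functions. -/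
def constL : K →ₗ[ℂ] H2 K where
  toFun x := ⟨expVec K 0 x, const_mem_hardy K x⟩
  map_add' x y := by
    apply Subtype.ext
    simp only [Submodule.coe_add]
    unfold expVec
    rw [← map_add]
    congr 1
    ext t
    simp [fourierSmulCM, smul_add]
  map_smul' c x := by
    apply Subtype.ext
    simp only [RingHom.id_apply, SetLike.val_smul]
    unfold expVec
    rw [← _root_.map_smul]
    congr 1
    ext t
    simp [fourierSmulCM]

end Shift


section RangeFunctions

variable {F : Type*} [NormedAddCommGroup F] [InnerProductSpace ℂ F] [CompleteSpace F]

/-- The orthogonal projection onto a closed subspace, as a plain function (defined to be `0`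
if the subspace is not closed). -/
def projTo (N : Submodule ℂ F) (x : F) : F :=
  letI := Classical.dec (IsClosed ((N : Set F)))
  if h : IsClosed ((N : Set F)) then
    haveI : CompleteSpace N := h.completeSpace_coe
    (orthogonalProjection N x : F)
  else 0

/-- A measurable range function in `F`: a map `J` from `𝕋` to closed subspaces of `F` such
that `t ↦ ⟪P_{J(t)} x, y⟫` is measurable for every `x, y ∈ F`. -/
def IsMeasRange (J : 𝕋 → Submodule ℂ F) : Prop :=
  (∀ t, IsClosed ((J t : Set F))) ∧
  ∀ x y : F, Measurable fun t => (inner ℂ (projTo (J t) x) y : ℂ)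

/-- The set of `f ∈ L²(𝕋, E)` such that `f(t) ∈ J(t)` for a.e. `t ∈ 𝕋`. -/
def rangeSet {E : Type*} [NormedAddCommGroup E] [NormedSpace ℂ E]
    (J : 𝕋 → Submodule ℂ E) : Set (L2 E) :=
  {f | ∀ᵐ t ∂μT, (f : 𝕋 → E) t ∈ J t}

end RangeFunctions

section OperatorNotions

variable {E : Type*} [NormedAddCommGroup E] [NormedSpace ℂ E]

/-- A subspace `M` is invariant under the bounded operator `A` if `A(M) ⊆ M`. -/
def InvariantUnder (A : E →L[ℂ] E) (M : Submodule ℂ E) : Prop :=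
  ∀ f ∈ M, A f ∈ M

/-- Two bounded operators commute. -/
def CommutesWith (A B : E →L[ℂ] E) : Prop := ∀ f, A (B f) = B (A f)

variable {F : Type*} [NormedAddCommGroup F] [InnerProductSpace ℂ F]

/-- A subspace `M` is reducing for `A` if both `M` and `M^⊥` are invariant under `A`. -/
def Reducing (A : F →L[ℂ] F) (M : Submodule ℂ F) : Prop :=
  InvariantUnder A M ∧ InvariantUnder A Mᗮ

/-- `Φ` is a partial isometry with initial space `W`: it is isometric on `W` and vanishes
on `W^⊥`. -/
def IsPartialIsometryOn (Φ : F →L[ℂ] F) (W : Submodule ℂ F) : Prop :=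
  (∀ f ∈ W, ‖Φ f‖ = ‖f‖) ∧ ∀ f ∈ Wᗮ, Φ f = 0

end OperatorNotions

section FullHardy

variable (K : Type) [NormedAddCommGroup K] [InnerProductSpace ℂ K] [CompleteSpace K]

/-- For a subspace `N ⊆ K`, the subspace `H²_N` of `H²_K`: those elements of the Hardy space
taking values in `N` almost everywhere. -/
def hardyIn (N : Submodule ℂ K) : Submodule ℂ (H2 K) where
  carrier := {g | ∀ᵐ z ∂μT, ((g : L2 K) : 𝕋 → K) z ∈ N}
  zero_mem' := by
    have h0 : ((0 : H2 K) : L2 K) = 0 := rfl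
    rw [Set.mem_setOf_eq, h0]
    filter_upwards [Lp.coeFn_zero K 2 μT] with z hz
    rw [hz]
    exact N.zero_mem
  add_mem' := by
    intro a b ha hb
    have h0 : ((a + b : H2 K) : L2 K) = (a : L2 K) + (b : L2 K) := rfl
    rw [Set.mem_setOf_eq, h0]
    filter_upwards [ha, hb, Lp.coeFn_add (a : L2 K) (b : L2 K)] with z ha' hb' hadd
    rw [hadd]
    exact N.add_mem ha' hb'
  smul_mem' := by
    intro c a ha
    have h0 : ((c • a : H2 K) : L2 K) = c • (a : L2 K) := rfl
    rw [Set.mem_setOf_eq, h0]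
    filter_upwards [ha, Lp.coeFn_smul c (a : L2 K)] with z ha' hsmul
    rw [hsmul]
    exact N.smul_mem c ha'

/-- The set of `f ∈ L²(𝕋, H²_K)` with `f(t) ∈ H²_{J(t)}` for a.e. `t`. If `J` is a measurable
range function in `K`, this is the full-Hardy subspace with base `J`. -/
def fullHardySet (J : 𝕋 → Submodule ℂ K) : Set (L2 (H2 K)) :=
  {f | ∀ᵐ t ∂μT, (f : 𝕋 → H2 K) t ∈ hardyIn K (J t)}

/-- A subspace `W ⊆ L²(𝕋, H²_K)` is full-Hardy if it is of the form
`{f : f(t) ∈ H²_{J(t)} a.e.}` for some measurable range function `J` in `K`. -/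
def IsFullHardy (W : Submodule ℂ (L2 (H2 K))) : Prop :=
  ∃ J : 𝕋 → Submodule ℂ K, IsMeasRange J ∧ (W : Set (L2 (H2 K))) = fullHardySet K J

end FullHardy

section Dimension

open scoped Classical in
/-- The Hilbert-space dimension of a subspace, as an element of `ℕ∞` (in a separable ambient
space this is the cardinality of any orthonormal basis). -/
def dimSub {F : Type*} [NormedAddCommGroup F] [InnerProductSpace ℂ F]
    (N : Submodule ℂ F) : ℕ∞ :=
  if FiniteDimensional ℂ ↥N then (Module.finrank ℂ ↥N : ℕ∞) else ⊤

end Dimension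

section ScalarCase

/-- Evaluation of an element of the scalar Hardy space (via its chosen representative). -/
def ev (g : H2 ℂ) (z : 𝕋) : ℂ := ((g : L2 ℂ) : 𝕋 → ℂ) z

/-- Iterated evaluation of an element of `L²(𝕋, H²)`. -/
def ev2 (f : L2 (H2 ℂ)) (t z : 𝕋) : ℂ := ev ((f : 𝕋 → H2 ℂ) t) z

/-- A function `h ∈ H²` is inner if `|h(z)| = 1` for a.e. `z ∈ 𝕋`. -/
def IsInnerFn (g : H2 ℂ) : Prop := ∀ᵐ z ∂μT, ‖ev g z‖ = 1

lemma ev_zero : ∀ᵐ z ∂μT, ev (0 : H2 ℂ) z = 0 := by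
  have h0 : ((0 : H2 ℂ) : L2 ℂ) = 0 := rfl
  unfold ev
  rw [h0]
  filter_upwards [Lp.coeFn_zero ℂ 2 μT] with z hz
  rw [hz]
  rfl

lemma ev_add (u v : H2 ℂ) : ∀ᵐ z ∂μT, ev (u + v) z = ev u z + ev v z := by
  have h0 : ((u + v : H2 ℂ) : L2 ℂ) = (u : L2 ℂ) + (v : L2 ℂ) := rfl
  unfold ev
  rw [h0]
  filter_upwards [Lp.coeFn_add (u : L2 ℂ) (v : L2 ℂ)] with z hz
  rw [hz]
  rfl

lemma ev_smul (c : ℂ) (u : H2 ℂ) : ∀ᵐ z ∂μT, ev (c • u) z = c * ev u z := by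
  have h0 : ((c • u : H2 ℂ) : L2 ℂ) = c • (u : L2 ℂ) := rfl
  unfold ev
  rw [h0]
  filter_upwards [Lp.coeFn_smul c (u : L2 ℂ)] with z hz
  rw [hz]
  rfl

/-- For `w ∈ H²`, the subspace `w·H² = {w·k : k ∈ H²}` of `H²` (membership described via
a.e. pointwise multiplication of representatives). -/
def mulSet (w : H2 ℂ) : Submodule ℂ (H2 ℂ) where
  carrier := {u | ∃ k : H2 ℂ, ∀ᵐ z ∂μT, ev u z = ev w z * ev k z}
  zero_mem' := by
    refine ⟨0, ?_⟩
    filter_upwards [ev_zero] with z hz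
    rw [hz, mul_zero]
  add_mem' := by
    rintro u v ⟨k₁, h₁⟩ ⟨k₂, h₂⟩
    refine ⟨k₁ + k₂, ?_⟩
    filter_upwards [h₁, h₂, ev_add u v, ev_add k₁ k₂] with z e1 e2 e3 e4
    rw [e3, e1, e2, e4, mul_add]
  smul_mem' := by
    rintro c u ⟨k, h⟩
    refine ⟨c • k, ?_⟩
    filter_upwards [h, ev_smul c u, ev_smul c k] with z e1 e2 e3
    rw [e2, e1, e3]
    ring

/-- The set `φ·L²(𝕋, H²) = {φ g : g ∈ L²(𝕋,H²)}`, where `(φ g)(t)(z) = φ(t)(z)·g(t)(z)`. -/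
def timesSet (φ : L2 (H2 ℂ)) : Set (L2 (H2 ℂ)) :=
  {h | ∃ g : L2 (H2 ℂ), ∀ᵐ t ∂μT, ∀ᵐ z ∂μT, ev2 h t z = ev2 φ t z * ev2 g t z}

end ScalarCase

section Aux

/-! ### Basic lemmas about `ev` and `H2 ℂ` -/

lemma H2.ext' {u v : H2 ℂ} (h : ∀ᵐ z ∂μT, ev u z = ev v z) : u = v :=
  Subtype.ext (MeasureTheory.Lp.ext h)

lemma inner_H2 (u v : H2 ℂ) : (inner ℂ u v : ℂ) = inner ℂ (u : L2 ℂ) (v : L2 ℂ) := rfl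

/-- The `n`-th Fourier monomial as an element of `L2 ℂ`. -/
abbrev feL (n : ℤ) : L2 ℂ := fourierLp 2 n

lemma coeFn_feL (n : ℤ) : (feL n : 𝕋 → ℂ) =ᵐ[μT] fun t => fourier n t :=
  coeFn_fourierLp 2 n

lemma inner_expVec_eq (n : ℤ) (x : ℂ) (v : L2 ℂ) :
    (inner ℂ (expVec ℂ n x) v : ℂ) = (starRingEnd ℂ) x * inner ℂ (feL n) v := by
  rw [MeasureTheory.L2.inner_def, MeasureTheory.L2.inner_def, ← integral_const_mul]
  refine integral_congr_ae ?_
  filter_upwards [coeFn_expVec ℂ n x, coeFn_feL n] with t h1 h2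
  rw [h1, h2]
  simp only [smul_eq_mul, map_mul, RCLike.inner_apply]
  ring

lemma mem_hardy_iff {v : L2 ℂ} :
    v ∈ Hardy ℂ ↔ ∀ n < (0:ℤ), (inner ℂ (feL n) v : ℂ) = 0 := by
  constructor
  · intro hv n hn
    simp only [Hardy, Submodule.mem_iInf, LinearMap.mem_ker, ContinuousLinearMap.coe_coe, innerSL_apply_apply] at hv
    have := hv n hn 1
    rwa [inner_expVec_eq, map_one, one_mul] at this
  · intro h
    simp only [Hardy, Submodule.mem_iInf, LinearMap.mem_ker, ContinuousLinearMap.coe_coe, innerSL_apply_apply]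
    intro n hn x
    rw [inner_expVec_eq, h n hn, mul_zero]

end Aux

section Aux2

lemma expVec_one (n : ℤ) : expVec ℂ n (1:ℂ) = feL n := by
  refine MeasureTheory.Lp.ext ?_
  filter_upwards [coeFn_expVec ℂ n 1, coeFn_feL n] with t h1 h2
  rw [h1, h2, smul_eq_mul, mul_one]

variable (K : Type) [NormedAddCommGroup K] [InnerProductSpace ℂ K] [CompleteSpace K]

lemma inner_expVec_mulF' (m n : ℤ) (x : K) (f : L2 K) :
    (inner ℂ (expVec K n x) (mulF m f) : ℂ) = inner ℂ (expVec K (n - m) x) f := by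
  rw [MeasureTheory.L2.inner_def, MeasureTheory.L2.inner_def]
  refine integral_congr_ae ?_
  filter_upwards [coeFn_mulF m f, coeFn_expVec K n x, coeFn_expVec K (n-m) x] with t h1 h2 h3
  rw [h1, h2, h3, inner_smul_left, inner_smul_left, inner_smul_right,
    ← fourier_neg, ← fourier_neg, ← mul_assoc, ← fourier_add]
  have h : -n + m = -(n - m) := by ring
  rw [h]

lemma mulF_mem_hardy' {m : ℤ} (hm : 0 ≤ m) {f : L2 K} (hf : f ∈ Hardy K) :
    mulF m f ∈ Hardy K := by
  simp only [Hardy, Submodule.mem_iInf, LinearMap.mem_ker, ContinuousLinearMap.coe_coe, innerSL_apply_apply] at hf ⊢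
  intro n hn x
  rw [inner_expVec_mulF']
  exact hf (n - m) (by omega) x

lemma inner_feL_mulF (m n : ℤ) (w : L2 ℂ) :
    (inner ℂ (feL n) (mulF m w) : ℂ) = inner ℂ (feL (n - m)) w := by
  rw [← expVec_one, ← expVec_one, inner_expVec_mulF']

/-- Multiplication by `fourier m` on the Hardy space, for `m : ℕ`. -/
def SmH (m : ℕ) : H2 ℂ →L[ℂ] H2 ℂ where
  toLinearMap := (mulF (E := ℂ) (m:ℤ)).toLinearMap.restrict
    (p := Hardy ℂ) (q := Hardy ℂ)
    (fun _ hx => mulF_mem_hardy' ℂ (by positivity) hx)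
  cont := by
    apply Continuous.subtype_mk
    exact (mulF (E := ℂ) (m:ℤ)).continuous.comp continuous_subtype_val

lemma coe_SmH (m : ℕ) (w : H2 ℂ) : (SmH m w : L2 ℂ) = mulF (m:ℤ) (w : L2 ℂ) := rfl

lemma feL_mem_hardy (m : ℕ) : feL m ∈ Hardy ℂ := by
  rw [mem_hardy_iff]
  intro n hn
  exact orthonormal_fourier.2 (by omega : n ≠ (m:ℤ))

/-- The Fourier monomials of nonnegative index, as elements of the Hardy space. -/
def fem (m : ℕ) : H2 ℂ := ⟨feL m, feL_mem_hardy m⟩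

lemma coe_fem (m : ℕ) : (fem m : L2 ℂ) = feL m := rfl

lemma orthonormal_fem : Orthonormal ℂ fem := by
  rw [orthonormal_iff_ite]
  intro i j
  have h := orthonormal_iff_ite.mp (orthonormal_fourier (T := 1)) (i:ℤ) (j:ℤ)
  rw [inner_H2, coe_fem, coe_fem]
  rw [h]
  by_cases hij : i = j
  · simp [hij]
  · rw [if_neg (by exact_mod_cast hij), if_neg hij]

lemma hardy_inner_eq_zero {u : H2 ℂ} {n : ℤ} (hn : n < 0) :
    (inner ℂ (feL n) (u : L2 ℂ) : ℂ) = 0 :=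
  mem_hardy_iff.mp u.2 n hn

lemma span_fem_dense : (Submodule.span ℂ (Set.range fem)).topologicalClosure = ⊤ := by
  rw [Submodule.topologicalClosure_eq_top_iff]
  rw [Submodule.eq_bot_iff]
  intro u hu
  have hfem : ∀ m : ℕ, (inner ℂ (fem m) u : ℂ) = 0 := fun m =>
    hu (fem m) (Submodule.subset_span ⟨m, rfl⟩)
  have hall : ∀ i : ℤ, (inner ℂ (fourierBasis (T := 1) i) ((u : L2 ℂ)) : ℂ) = 0 := by
    intro i
    have hcoe : (fourierBasis (T := 1) i : L2 ℂ) = feL i :=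
      congrFun coe_fourierBasis i
    rw [hcoe]
    rcases lt_or_ge i 0 with hi | hi
    · exact hardy_inner_eq_zero hi
    · have := hfem i.toNat
      rw [inner_H2, coe_fem] at this
      rwa [(by omega : (i.toNat : ℤ) = i)] at this
  have hz : (u : L2 ℂ) = 0 := by
    have h1 : ∀ i, (fourierBasis (T := 1)).repr (u : L2 ℂ) i = 0 := by
      intro i
      rw [(fourierBasis (T := 1)).repr_apply_apply]
      exact hall i
    have h2 : (fourierBasis (T := 1)).repr (u : L2 ℂ) = 0 := by
      ext i; exact h1 i
    have := congrArg (fourierBasis (T := 1)).repr.symm h2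
    rwa [LinearIsometryEquiv.symm_apply_apply, map_zero] at this
  exact Subtype.ext hz

/-- The Hilbert basis of the scalar Hardy space given by the nonnegative Fourier monomials. -/
def hb : HilbertBasis ℕ ℂ (H2 ℂ) := HilbertBasis.mk orthonormal_fem span_fem_dense.ge

lemma hb_apply (m : ℕ) : hb m = fem m := by
  have := HilbertBasis.coe_mk orthonormal_fem span_fem_dense.ge
  exact congrFun this m

end Aux2

section Aux3

open Classical in
/-- Pointwise product of two elements of `H²`, defined when the product is again in `H²`
(and `0` otherwise). -/
def mulH (w u : H2 ℂ) : H2 ℂ :=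
  if h : ∃ v : H2 ℂ, ∀ᵐ z ∂μT, ev v z = ev w z * ev u z then h.choose else 0

lemma mulH_eq {w u v : H2 ℂ} (hv : ∀ᵐ z ∂μT, ev v z = ev w z * ev u z) : mulH w u = v := by
  have h : ∃ v : H2 ℂ, ∀ᵐ z ∂μT, ev v z = ev w z * ev u z := ⟨v, hv⟩
  rw [mulH, dif_pos h]
  refine H2.ext' ?_
  filter_upwards [h.choose_spec, hv] with z h1 h2
  rw [h1, h2]

lemma mulH_spec {w u : H2 ℂ} (h : ∃ v : H2 ℂ, ∀ᵐ z ∂μT, ev v z = ev w z * ev u z) :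
    ∀ᵐ z ∂μT, ev (mulH w u) z = ev w z * ev u z := by
  rw [mulH, dif_pos h]
  exact h.choose_spec

lemma mulH_zero_right (w : H2 ℂ) : mulH w 0 = 0 := by
  refine mulH_eq ?_
  filter_upwards [ev_zero] with z hz
  rw [hz, mul_zero]

lemma mulH_zero_left (u : H2 ℂ) : mulH 0 u = 0 := by
  refine mulH_eq ?_
  filter_upwards [ev_zero] with z hz
  rw [hz, zero_mul]

lemma mulH_fem (w : H2 ℂ) (m : ℕ) : mulH w (fem m) = SmH m w := by
  refine mulH_eq ?_
  have h1 := coeFn_mulF (E := ℂ) (m:ℤ) (w : L2 ℂ)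
  have h2 := coeFn_feL (m:ℤ)
  filter_upwards [h1, h2] with z hz1 hz2
  show ((SmH m w : L2 ℂ) : 𝕋 → ℂ) z = _
  rw [coe_SmH, hz1]
  show fourier (m:ℤ) z * ev w z = ev w z * ev (fem m) z
  have : ev (fem m) z = fourier (m:ℤ) z := by
    show ((feL (m:ℤ) : 𝕋 → ℂ)) z = _
    rw [hz2]
  rw [this]; ring

lemma memLp_mul_inner {w : H2 ℂ} (hw : IsInnerFn w) (u : H2 ℂ) :
    MemLp (fun z => ev w z * ev u z) 2 μT := by
  refine MemLp.of_le (Lp.memLp (u : L2 ℂ))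
    ((Lp.aestronglyMeasurable (w : L2 ℂ)).mul (Lp.aestronglyMeasurable (u : L2 ℂ))) ?_
  filter_upwards [hw] with z hz
  rw [norm_mul, hz, one_mul]
  exact le_rfl

lemma memLp_conj_mul {w : H2 ℂ} (hw : IsInnerFn w) (n : ℤ) :
    MemLp (fun z => fourier n z * (starRingEnd ℂ) (ev w z)) 2 μT := by
  refine MemLp.of_le (memLp_const (1:ℂ))
    (((fourier n).continuous.aestronglyMeasurable).mul
      (Complex.continuous_conj.comp_aestronglyMeasurable (Lp.aestronglyMeasurable (w : L2 ℂ)))) ?_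
  filter_upwards [hw] with z hz
  rw [norm_mul, norm_fourier, one_mul, RCLike.norm_conj, hz, norm_one]

lemma toLp_mul_mem_hardy {w : H2 ℂ} (hw : IsInnerFn w) (u : H2 ℂ) :
    (memLp_mul_inner hw u).toLp _ ∈ Hardy ℂ := by
  rw [mem_hardy_iff]
  intro n hn
  set qn : L2 ℂ := (memLp_conj_mul hw n).toLp _ with hqn
  have key : (inner ℂ (feL n) ((memLp_mul_inner hw u).toLp _) : ℂ) = inner ℂ qn (u : L2 ℂ) := by
    rw [MeasureTheory.L2.inner_def, MeasureTheory.L2.inner_def]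
    refine integral_congr_ae ?_
    filter_upwards [MemLp.coeFn_toLp (memLp_mul_inner hw u), MemLp.coeFn_toLp (memLp_conj_mul hw n),
      coeFn_feL n] with z h1 h2 h3
    rw [h1, h2, h3]
    simp only [ev, RCLike.inner_apply, map_mul, Complex.conj_conj]
    ring
  rw [key]
  have hker : Submodule.span ℂ (Set.range fem) ≤
      LinearMap.ker (((innerSL ℂ qn).comp (Hardy ℂ).subtypeL : H2 ℂ →L[ℂ] ℂ) : H2 ℂ →ₗ[ℂ] ℂ) := by
    rw [Submodule.span_le]
    rintro _ ⟨m, rfl⟩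
    simp only [SetLike.mem_coe, LinearMap.mem_ker, ContinuousLinearMap.coe_coe,
      ContinuousLinearMap.coe_comp', Function.comp_apply, Submodule.coe_subtypeL',
      Submodule.coe_subtype, innerSL_apply_apply]
    have step : (inner ℂ qn ((fem m : L2 ℂ)) : ℂ) = inner ℂ (feL n) (mulF (m:ℤ) (w : L2 ℂ)) := by
      rw [MeasureTheory.L2.inner_def, MeasureTheory.L2.inner_def]
      refine integral_congr_ae ?_
      filter_upwards [MemLp.coeFn_toLp (memLp_conj_mul hw n), coeFn_feL (m:ℤ),
        coeFn_mulF (E := ℂ) (m:ℤ) (w : L2 ℂ), coeFn_feL n] with z h1 h2 h3 h4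
      rw [h1, h3, h4]
      show inner ℂ (fourier n z * (starRingEnd ℂ) (ev w z)) ((feL (m:ℤ) : 𝕋 → ℂ) z)
        = inner ℂ (fourier n z) (fourier (m:ℤ) z • ev w z)
      rw [h2]
      simp only [RCLike.inner_apply, map_mul, Complex.conj_conj, smul_eq_mul]
      ring
    rw [step, inner_feL_mulF, hardy_inner_eq_zero (by omega)]
  have htop : (Submodule.span ℂ (Set.range fem)).topologicalClosure ≤
      LinearMap.ker (((innerSL ℂ qn).comp (Hardy ℂ).subtypeL : H2 ℂ →L[ℂ] ℂ) : H2 ℂ →ₗ[ℂ] ℂ) :=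
    Submodule.topologicalClosure_minimal _ hker (ContinuousLinearMap.isClosed_ker _)
  rw [span_fem_dense] at htop
  have := htop (Submodule.mem_top (x := u))
  simpa using this

lemma exists_mul_inner {w : H2 ℂ} (hw : IsInnerFn w) (u : H2 ℂ) :
    ∃ v : H2 ℂ, ∀ᵐ z ∂μT, ev v z = ev w z * ev u z :=
  ⟨⟨(memLp_mul_inner hw u).toLp _, toLp_mul_mem_hardy hw u⟩,
    MemLp.coeFn_toLp (memLp_mul_inner hw u)⟩

lemma mulH_spec_inner {w : H2 ℂ} (hw : IsInnerFn w) (u : H2 ℂ) :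
    ∀ᵐ z ∂μT, ev (mulH w u) z = ev w z * ev u z :=
  mulH_spec (exists_mul_inner hw u)

/-- `w` is zero or an inner ℂ function. -/
def Good (w : H2 ℂ) : Prop := w = 0 ∨ IsInnerFn w

lemma Good.spec {w : H2 ℂ} (hG : Good w) (u : H2 ℂ) :
    ∀ᵐ z ∂μT, ev (mulH w u) z = ev w z * ev u z := by
  rcases hG with rfl | hw
  · rw [mulH_zero_left]
    filter_upwards [ev_zero] with z hz
    rw [hz, zero_mul]
  · exact mulH_spec_inner hw u

lemma mulH_add {w : H2 ℂ} (hG : Good w) (u v : H2 ℂ) :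
    mulH w (u + v) = mulH w u + mulH w v := by
  refine mulH_eq ?_
  filter_upwards [hG.spec u, hG.spec v, ev_add (mulH w u) (mulH w v), ev_add u v]
    with z h1 h2 h3 h4
  rw [h3, h1, h2, h4, mul_add]

lemma mulH_smul {w : H2 ℂ} (hG : Good w) (c : ℂ) (u : H2 ℂ) :
    mulH w (c • u) = c • mulH w u := by
  refine mulH_eq ?_
  filter_upwards [hG.spec u, ev_smul c (mulH w u), ev_smul c u] with z h1 h2 h3
  rw [h2, h1, h3]; ring

lemma norm_H2_eq {u v : H2 ℂ} (h : ∀ᵐ z ∂μT, ‖ev u z‖ = ‖ev v z‖) : ‖u‖ = ‖v‖ := by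
  show ‖(u : L2 ℂ)‖ = ‖(v : L2 ℂ)‖
  rw [Lp.norm_def, Lp.norm_def]
  exact congrArg ENNReal.toReal (eLpNorm_congr_norm_ae h)

lemma norm_mulH_inner {w : H2 ℂ} (hw : IsInnerFn w) (u : H2 ℂ) : ‖mulH w u‖ = ‖u‖ := by
  refine norm_H2_eq ?_
  filter_upwards [mulH_spec_inner hw u, hw] with z h1 h2
  rw [h1, norm_mul, h2, one_mul]

lemma norm_mulH_le {w : H2 ℂ} (hG : Good w) (u : H2 ℂ) : ‖mulH w u‖ ≤ ‖u‖ := by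
  rcases hG with rfl | hw
  · rw [mulH_zero_left]; simpa using norm_nonneg u
  · rw [norm_mulH_inner hw]

lemma mem_mulSet {w u : H2 ℂ} :
    u ∈ mulSet w ↔ ∃ k, ∀ᵐ z ∂μT, ev u z = ev w z * ev k z := Iff.rfl

lemma mulH_mem_mulSet {w : H2 ℂ} (hG : Good w) (k : H2 ℂ) : mulH w k ∈ mulSet w :=
  ⟨k, hG.spec k⟩

lemma mem_mulSet_iff {w : H2 ℂ} (hG : Good w) {u : H2 ℂ} :
    u ∈ mulSet w ↔ ∃ k, mulH w k = u := by
  constructor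
  · rintro ⟨k, hk⟩
    exact ⟨k, mulH_eq hk⟩
  · rintro ⟨k, rfl⟩
    exact mulH_mem_mulSet hG k

lemma mulSet_zero : mulSet (0 : H2 ℂ) = ⊥ := by
  ext u
  rw [mem_mulSet, Submodule.mem_bot]
  constructor
  · rintro ⟨k, hk⟩
    refine H2.ext' ?_
    filter_upwards [hk, ev_zero] with z h1 h2
    rw [h1, h2, zero_mul]
  · rintro rfl
    exact ⟨0, by filter_upwards [ev_zero] with z hz; rw [hz, zero_mul]⟩

/-- Multiplication by an inner ℂ function, as a linear isometry of `H²`. -/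
def mulLI {w : H2 ℂ} (hw : IsInnerFn w) : H2 ℂ →ₗᵢ[ℂ] H2 ℂ where
  toLinearMap :=
    { toFun := mulH w
      map_add' := mulH_add (Or.inr hw)
      map_smul' := fun c u => mulH_smul (Or.inr hw) c u }
  norm_map' := norm_mulH_inner hw

lemma coe_mulLI {w : H2 ℂ} (hw : IsInnerFn w) : ⇑(mulLI hw) = mulH w := rfl

lemma mulSet_eq_range {w : H2 ℂ} (hw : IsInnerFn w) :
    (mulSet w : Set (H2 ℂ)) = Set.range (mulH w) := by
  ext u
  rw [SetLike.mem_coe, mem_mulSet_iff (Or.inr hw)]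
  exact ⟨fun ⟨k, hk⟩ => ⟨k, hk⟩, fun ⟨k, hk⟩ => ⟨k, hk⟩⟩

lemma isClosed_mulSet {w : H2 ℂ} (hG : Good w) : IsClosed ((mulSet w : Set (H2 ℂ))) := by
  rcases hG with rfl | hw
  · rw [mulSet_zero, Submodule.bot_coe]
    exact isClosed_singleton
  · rw [mulSet_eq_range hw, ← coe_mulLI hw]
    exact ((mulLI hw).isometry.isClosedEmbedding).isClosed_range

end Aux3

section Aux4

variable (K : Type) [NormedAddCommGroup K] [InnerProductSpace ℂ K] [CompleteSpace K]

lemma inner_mulF (m : ℤ) (f g : L2 K) :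
    (inner ℂ (mulF m f) g : ℂ) = inner ℂ f (mulF (-m) g) := by
  rw [MeasureTheory.L2.inner_def, MeasureTheory.L2.inner_def]
  refine integral_congr_ae ?_
  filter_upwards [coeFn_mulF m f, coeFn_mulF (-m) g] with t h1 h2
  rw [h1, h2, inner_smul_left, inner_smul_right, ← fourier_neg]

/-- The multiplication operator by an inner ℂ function, as a continuous linear map. -/
def mulCLM {w : H2 ℂ} (hw : IsInnerFn w) : H2 ℂ →L[ℂ] H2 ℂ :=
  (mulLI hw).toContinuousLinearMap

lemma mulCLM_apply {w : H2 ℂ} (hw : IsInnerFn w) (u : H2 ℂ) : mulCLM hw u = mulH w u := rfl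

lemma projTo_inner_eq {w : H2 ℂ} (hG : Good w) (x y : H2 ℂ) :
    (inner ℂ (projTo (mulSet w) x) y : ℂ)
      = ∑' m : ℕ, inner ℂ x (mulH w (fem m)) * inner ℂ (mulH w (fem m)) y := by
  rcases hG with rfl | hw
  · have hcl : IsClosed ((mulSet (0 : H2 ℂ) : Set (H2 ℂ))) := isClosed_mulSet (Or.inl rfl)
    haveI : CompleteSpace (mulSet (0 : H2 ℂ)) := hcl.completeSpace_coe
    have hproj : projTo (mulSet (0 : H2 ℂ)) x = 0 := by
      simp only [projTo, dif_pos hcl]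
      have : (orthogonalProjection (mulSet (0 : H2 ℂ)) x : H2 ℂ) = (0 : H2 ℂ) := by
        rw [← starProjection_apply]
        refine eq_starProjection_of_mem_of_inner_eq_zero (Submodule.zero_mem _) ?_
        intro v hv
        rw [mulSet_zero, Submodule.mem_bot] at hv
        rw [hv, inner_zero_right]
      exact this
    rw [hproj]
    simp only [mulH_zero_left, inner_zero_right, zero_mul, tsum_zero, inner_zero_left]
  · set A := mulCLM hw with hA
    set B := ContinuousLinearMap.adjoint A with hB
    have hAapp : ∀ u, A u = mulH w u := fun u => rfl
    have hcl : IsClosed ((mulSet w : Set (H2 ℂ))) := isClosed_mulSet (Or.inr hw)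
    haveI : CompleteSpace (mulSet w) := hcl.completeSpace_coe
    have hmem : A (B x) ∈ mulSet w := by
      rw [hAapp]; exact mulH_mem_mulSet (Or.inr hw) (B x)
    have horth : ∀ v ∈ mulSet w, (inner ℂ (x - A (B x)) v : ℂ) = 0 := by
      intro v hv
      obtain ⟨k, rfl⟩ := (mem_mulSet_iff (Or.inr hw)).mp hv
      rw [inner_sub_left]
      have h1 : (inner ℂ (A (B x)) (mulH w k) : ℂ) = inner ℂ (B x) k := by
        rw [← hAapp k]
        exact (mulLI hw).inner_map_map (B x) k
      have h2 : (inner ℂ (B x) k : ℂ) = inner ℂ x (A k) :=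
        ContinuousLinearMap.adjoint_inner_left A k x
      rw [h1, h2, hAapp, sub_self]
    have hproj : projTo (mulSet w) x = A (B x) := by
      simp only [projTo, dif_pos hcl]
      rw [← starProjection_apply]
      exact eq_starProjection_of_mem_of_inner_eq_zero hmem horth
    rw [hproj]
    have hx : ∀ m : ℕ, (inner ℂ x (mulH w (fem m)) : ℂ) = inner ℂ (B x) (fem m) := by
      intro m
      rw [← hAapp, ← ContinuousLinearMap.adjoint_inner_left A (fem m) x]
    have hy : ∀ m : ℕ, (inner ℂ (mulH w (fem m)) y : ℂ) = inner ℂ (fem m) (B y) := by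
      intro m
      have h := ContinuousLinearMap.adjoint_inner_left A (fem m) y
      calc (inner ℂ (mulH w (fem m)) y : ℂ)
          = (starRingEnd ℂ) (inner ℂ y (A (fem m)) : ℂ) := by
            rw [hAapp]; exact (inner_conj_symm (mulH w (fem m)) y).symm
        _ = (starRingEnd ℂ) (inner ℂ (B y) (fem m) : ℂ) := by rw [h]
        _ = inner ℂ (fem m) (B y) := inner_conj_symm (fem m) (B y)
    have hsum := hb.tsum_inner_mul_inner (B x) (B y)
    calc (inner ℂ (A (B x)) y : ℂ) = inner ℂ (B x) (B y) := by
          rw [← ContinuousLinearMap.adjoint_inner_right A (B x) y]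
      _ = ∑' m : ℕ, inner ℂ (B x) (hb m) * inner ℂ (hb m) (B y) := hsum.symm
      _ = ∑' m : ℕ, inner ℂ x (mulH w (fem m)) * inner ℂ (mulH w (fem m)) y := by
          refine tsum_congr fun m => ?_
          rw [hx, hy, hb_apply]

lemma summable_proj_terms {w : H2 ℂ} (hG : Good w) (x y : H2 ℂ) :
    Summable fun m : ℕ => (inner ℂ x (mulH w (fem m)) : ℂ) * inner ℂ (mulH w (fem m)) y := by
  rcases hG with rfl | hw
  · refine summable_zero.congr fun m => ?_
    simp [mulH_zero_left]
  · set A := mulCLM hw with hA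
    set B := ContinuousLinearMap.adjoint A with hB
    have hAapp : ∀ u, A u = mulH w u := fun u => rfl
    refine (hb.summable_inner_mul_inner (B x) (B y)).congr fun m => ?_
    have hx : (inner ℂ x (mulH w (fem m)) : ℂ) = inner ℂ (B x) (fem m) := by
      rw [← hAapp, ← ContinuousLinearMap.adjoint_inner_left A (fem m) x]
    have hy : (inner ℂ (mulH w (fem m)) y : ℂ) = inner ℂ (fem m) (B y) := by
      have h := ContinuousLinearMap.adjoint_inner_left A (fem m) y
      calc (inner ℂ (mulH w (fem m)) y : ℂ)
          = (starRingEnd ℂ) (inner ℂ y (A (fem m)) : ℂ) := by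
            rw [hAapp]; exact (inner_conj_symm (mulH w (fem m)) y).symm
        _ = (starRingEnd ℂ) (inner ℂ (B y) (fem m) : ℂ) := by rw [h]
        _ = inner ℂ (fem m) (B y) := inner_conj_symm (fem m) (B y)
    rw [hb_apply, hx, hy]

lemma isClosed_rangeSet {E : Type*} [NormedAddCommGroup E] [NormedSpace ℂ E]
    {J : 𝕋 → Submodule ℂ E} (hJ : ∀ t, IsClosed ((J t : Set E))) :
    IsClosed (rangeSet J) := by
  refine IsSeqClosed.isClosed ?_
  intro f g hf hfg
  have h1 : Filter.Tendsto (fun n => eLpNorm ((f n : 𝕋 → E) - (g : 𝕋 → E)) 2 μT)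
      Filter.atTop (nhds 0) := (Lp.tendsto_Lp_iff_tendsto_eLpNorm' f g).mp hfg
  have h2 : TendstoInMeasure μT (fun n => (f n : 𝕋 → E)) Filter.atTop (g : 𝕋 → E) :=
    tendstoInMeasure_of_tendsto_eLpNorm (by norm_num)
      (fun n => Lp.aestronglyMeasurable (f n)) (Lp.aestronglyMeasurable g) h1
  obtain ⟨ns, _, hns⟩ := h2.exists_seq_tendsto_ae
  have hmem : ∀ᵐ t ∂μT, ∀ i : ℕ, ((f (ns i) : 𝕋 → E)) t ∈ J t :=
    ae_all_iff.mpr fun i => hf (ns i)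
  show ∀ᵐ t ∂μT, (g : 𝕋 → E) t ∈ J t
  filter_upwards [hns, hmem] with t h1t h2t
  exact (hJ t).mem_of_tendsto h1t (Filter.Eventually.of_forall fun i => h2t i)

end Aux4

section Aux5

open Classical in
/-- Multiplication of `u ∈ L²` by the conjugate of `w ∈ L²`, whenever the result is in `L²`
(and `0` otherwise). -/
def qmul (w u : L2 ℂ) : L2 ℂ :=
  if h : MemLp (fun z => (starRingEnd ℂ) ((w : 𝕋 → ℂ) z) * (u : 𝕋 → ℂ) z) 2 μT
  then h.toLp _ else 0

lemma qmul_coeFn {w u : L2 ℂ}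
    (h : MemLp (fun z => (starRingEnd ℂ) ((w : 𝕋 → ℂ) z) * (u : 𝕋 → ℂ) z) 2 μT) :
    (qmul w u : 𝕋 → ℂ) =ᵐ[μT] fun z => (starRingEnd ℂ) ((w : 𝕋 → ℂ) z) * (u : 𝕋 → ℂ) z := by
  rw [qmul, dif_pos h]
  exact MemLp.coeFn_toLp h

lemma memLp_qmul_inner {w : H2 ℂ} (hw : IsInnerFn w) (u : L2 ℂ) :
    MemLp (fun z => (starRingEnd ℂ) (((w : L2 ℂ) : 𝕋 → ℂ) z) * (u : 𝕋 → ℂ) z) 2 μT := by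
  refine MemLp.of_le (Lp.memLp u)
    ((Complex.continuous_conj.comp_aestronglyMeasurable
      (Lp.aestronglyMeasurable (w : L2 ℂ))).mul (Lp.aestronglyMeasurable u)) ?_
  filter_upwards [hw] with z hz
  rw [norm_mul, RCLike.norm_conj]
  show ‖ev w z‖ * _ ≤ _
  rw [hz, one_mul]

lemma qmul_eq {w u v : L2 ℂ}
    (hv : (v : 𝕋 → ℂ) =ᵐ[μT] fun z => (starRingEnd ℂ) ((w : 𝕋 → ℂ) z) * (u : 𝕋 → ℂ) z) :
    qmul w u = v := by
  have h : MemLp (fun z => (starRingEnd ℂ) ((w : 𝕋 → ℂ) z) * (u : 𝕋 → ℂ) z) 2 μT :=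
    (Lp.memLp v).ae_eq hv
  refine MeasureTheory.Lp.ext ?_
  filter_upwards [qmul_coeFn h, hv] with z h1 h2
  rw [h1, ← h2]

lemma qmul_zero_left (u : L2 ℂ) : qmul 0 u = 0 := by
  refine qmul_eq ?_
  have h0 := Lp.coeFn_zero (E := ℂ) (p := 2) (μ := μT)
  filter_upwards [h0] with z hz
  have hz' : ((0 : L2 ℂ) : 𝕋 → ℂ) z = 0 := by rw [hz]; rfl
  rw [hz', map_zero, zero_mul]

lemma qmul_zero_right (w : L2 ℂ) : qmul w 0 = 0 := by
  refine qmul_eq ?_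
  filter_upwards [Lp.coeFn_zero ℂ 2 μT] with z hz
  rw [hz]
  simp

end Aux5

section Aux5b

lemma qmul_add {w : H2 ℂ} (hG : Good w) (u v : L2 ℂ) :
    qmul (w : L2 ℂ) (u + v) = qmul (w : L2 ℂ) u + qmul (w : L2 ℂ) v := by
  rcases hG with rfl | hw
  · rw [ZeroMemClass.coe_zero, qmul_zero_left, qmul_zero_left, qmul_zero_left, add_zero]
  · refine qmul_eq ?_
    filter_upwards [Lp.coeFn_add (qmul (w : L2 ℂ) u) (qmul (w : L2 ℂ) v),
      qmul_coeFn (memLp_qmul_inner hw u), qmul_coeFn (memLp_qmul_inner hw v),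
      Lp.coeFn_add u v] with z h1 h2 h3 h4
    rw [h1]
    show qmul _ u z + qmul _ v z = _
    rw [h2, h3, h4]
    show _ = (starRingEnd ℂ) _ * (u z + v z)
    ring

lemma qmul_smul {w : H2 ℂ} (hG : Good w) (c : ℂ) (u : L2 ℂ) :
    qmul (w : L2 ℂ) (c • u) = c • qmul (w : L2 ℂ) u := by
  rcases hG with rfl | hw
  · rw [ZeroMemClass.coe_zero, qmul_zero_left, qmul_zero_left, smul_zero]
  · refine qmul_eq ?_
    filter_upwards [Lp.coeFn_smul c (qmul (w : L2 ℂ) u),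
      qmul_coeFn (memLp_qmul_inner hw u), Lp.coeFn_smul c u] with z h1 h2 h3
    rw [h1]
    show c • (qmul _ u z) = _
    rw [h2, h3]
    show c * _ = (starRingEnd ℂ) _ * (c * u z)
    ring

lemma norm_qmul_le {w : H2 ℂ} (hG : Good w) (u : L2 ℂ) : ‖qmul (w : L2 ℂ) u‖ ≤ ‖u‖ := by
  rcases hG with rfl | hw
  · rw [ZeroMemClass.coe_zero, qmul_zero_left, norm_zero]
    exact norm_nonneg u
  · refine le_of_eq ?_
    rw [Lp.norm_def, Lp.norm_def]
    refine congrArg ENNReal.toReal ?_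
    refine eLpNorm_congr_norm_ae ?_
    filter_upwards [qmul_coeFn (memLp_qmul_inner hw u), hw] with z h1 h2
    rw [h1, norm_mul, RCLike.norm_conj]
    show ‖ev w z‖ * _ = _
    rw [h2, one_mul]

lemma qmul_sub {w : H2 ℂ} (hG : Good w) (u v : L2 ℂ) :
    qmul (w : L2 ℂ) (u - v) = qmul (w : L2 ℂ) u - qmul (w : L2 ℂ) v := by
  have h := qmul_add hG (u - v) v
  rw [sub_add_cancel] at h
  rw [h]; exact (add_sub_cancel_right _ _).symm

lemma qmul_lipschitz {w : H2 ℂ} (hG : Good w) :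
    LipschitzWith 1 (fun u => qmul (w : L2 ℂ) u) := by
  refine LipschitzWith.of_dist_le_mul fun u v => ?_
  rw [NNReal.coe_one, one_mul, dist_eq_norm, dist_eq_norm, ← qmul_sub hG]
  exact norm_qmul_le hG (u - v)

lemma qmul_tendsto {w : H2 ℂ} (hG : Good w) {c : ℕ → L2 ℂ} {u : L2 ℂ}
    (h : Filter.Tendsto c Filter.atTop (nhds u)) :
    Filter.Tendsto (fun k => qmul (w : L2 ℂ) (c k)) Filter.atTop (nhds (qmul (w : L2 ℂ) u)) :=
  ((qmul_lipschitz hG).continuous.tendsto u).comp h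

lemma memLp_conj (u : L2 ℂ) : MemLp (fun z => (starRingEnd ℂ) ((u : 𝕋 → ℂ) z)) 2 μT := by
  refine MemLp.of_le (Lp.memLp u)
    (Complex.continuous_conj.comp_aestronglyMeasurable (Lp.aestronglyMeasurable u)) ?_
  refine Filter.Eventually.of_forall fun z => ?_
  rw [RCLike.norm_conj]

/-- Complex conjugation on `L²`. -/
def conjL2 (u : L2 ℂ) : L2 ℂ := (memLp_conj u).toLp _

lemma coeFn_conjL2 (u : L2 ℂ) :
    (conjL2 u : 𝕋 → ℂ) =ᵐ[μT] fun z => (starRingEnd ℂ) ((u : 𝕋 → ℂ) z) :=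
  MemLp.coeFn_toLp (memLp_conj u)

lemma isometry_conjL2 : Isometry conjL2 := by
  refine Isometry.of_dist_eq fun u v => ?_
  rw [Lp.dist_def, Lp.dist_def]
  refine congrArg ENNReal.toReal ?_
  have h1 : (conjL2 u : 𝕋 → ℂ) - (conjL2 v : 𝕋 → ℂ)
      =ᵐ[μT] fun z => (starRingEnd ℂ) ((u : 𝕋 → ℂ) z - (v : 𝕋 → ℂ) z) := by
    filter_upwards [coeFn_conjL2 u, coeFn_conjL2 v] with z h1 h2
    show (conjL2 u : 𝕋 → ℂ) z - (conjL2 v : 𝕋 → ℂ) z = _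
    rw [h1, h2, map_sub]
  rw [eLpNorm_congr_ae h1]
  refine eLpNorm_congr_norm_ae ?_
  refine Filter.Eventually.of_forall fun z => ?_
  rw [RCLike.norm_conj]
  rfl

lemma qmul_feL (w : L2 ℂ) (m : ℤ) : qmul w (feL m) = conjL2 (mulF (-m) w) := by
  refine qmul_eq ?_
  filter_upwards [coeFn_conjL2 (mulF (-m) w), coeFn_mulF (E := ℂ) (-m) w, coeFn_feL m]
    with z h1 h2 h3
  rw [h1, h2, h3]
  show (starRingEnd ℂ) (fourier (-m) z • _) = _
  rw [smul_eq_mul, map_mul, ← fourier_neg, neg_neg]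
  ring

lemma stronglyMeasurable_qmul_fixed {ψ : 𝕋 → H2 ℂ} (hψ : StronglyMeasurable ψ)
    (hG : ∀ t, Good (ψ t)) (c : L2 ℂ) :
    StronglyMeasurable fun t => qmul ((ψ t : L2 ℂ)) c := by
  have hspan : ∀ c ∈ Submodule.span ℂ (Set.range (fourierLp (T := 1) 2)),
      StronglyMeasurable fun t => qmul ((ψ t : L2 ℂ)) c := by
    intro c hc
    induction hc using Submodule.span_induction with
    | mem x hx =>
        obtain ⟨m, rfl⟩ := hx
        have heq : (fun t => qmul ((ψ t : L2 ℂ)) (fourierLp 2 m))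
            = fun t => conjL2 (mulF (-m) ((ψ t : L2 ℂ))) := funext fun t => qmul_feL _ m
        rw [heq]
        exact (isometry_conjL2.continuous.comp
          ((mulF (E := ℂ) (-m)).continuous.comp continuous_subtype_val)).comp_stronglyMeasurable hψ
    | zero =>
        have heq : (fun t => qmul ((ψ t : L2 ℂ)) 0) = fun _ => (0 : L2 ℂ) :=
          funext fun t => qmul_zero_right _
        rw [heq]
        exact stronglyMeasurable_const
    | add x y hx hy ihx ihy =>
        have heq : (fun t => qmul ((ψ t : L2 ℂ)) (x + y))
            = fun t => qmul ((ψ t : L2 ℂ)) x + qmul ((ψ t : L2 ℂ)) y :=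
          funext fun t => qmul_add (hG t) x y
        rw [heq]
        exact ihx.add ihy
    | smul a x hx ih =>
        have heq : (fun t => qmul ((ψ t : L2 ℂ)) (a • x))
            = fun t => a • qmul ((ψ t : L2 ℂ)) x :=
          funext fun t => qmul_smul (hG t) a x
        rw [heq]
        exact ih.const_smul a
  have hdense := span_fourierLp_closure_eq_top (T := 1) (p := 2) (by norm_num)
  have hmem : c ∈ closure ((Submodule.span ℂ (Set.range (fourierLp (T := 1) 2)) : Set (L2 ℂ))) := by
    rw [← Submodule.topologicalClosure_coe, hdense]
    trivial
  obtain ⟨x, hxmem, hxlim⟩ := mem_closure_iff_seq_limit.mp hmem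
  exact stronglyMeasurable_of_tendsto Filter.atTop (fun k => hspan (x k) (hxmem k))
    (tendsto_pi_nhds.mpr fun t => qmul_tendsto (hG t) hxlim)

lemma stronglyMeasurable_qmul_simple {ψ : 𝕋 → H2 ℂ} (hψ : StronglyMeasurable ψ)
    (hG : ∀ t, Good (ψ t)) (s : SimpleFunc 𝕋 (L2 ℂ)) :
    StronglyMeasurable fun t => qmul ((ψ t : L2 ℂ)) (s t) := by
  classical
  refine SimpleFunc.induction ?_ ?_ s
  · intro c sset hs
    have heq : (fun t => qmul ((ψ t : L2 ℂ))
        ((SimpleFunc.piecewise sset hs (SimpleFunc.const 𝕋 c) (SimpleFunc.const 𝕋 0)) t))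
        = Set.piecewise sset (fun t => qmul ((ψ t : L2 ℂ)) c) (fun _ => 0) := by
      funext t
      by_cases ht : t ∈ sset
      · simp only [SimpleFunc.piecewise_apply, if_pos ht, Set.piecewise_eq_of_mem _ _ _ ht]
        rfl
      · simp only [SimpleFunc.piecewise_apply, if_neg ht, Set.piecewise_eq_of_notMem _ _ _ ht]
        exact qmul_zero_right _
    rw [heq]
    exact StronglyMeasurable.piecewise hs (stronglyMeasurable_qmul_fixed hψ hG c)
      stronglyMeasurable_const
  · intro f g _ ihf ihg
    have heq : (fun t => qmul ((ψ t : L2 ℂ)) ((f + g) t))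
        = fun t => qmul ((ψ t : L2 ℂ)) (f t) + qmul ((ψ t : L2 ℂ)) (g t) := by
      funext t
      rw [SimpleFunc.coe_add, Pi.add_apply, qmul_add (hG t)]
    rw [heq]
    exact ihf.add ihg

lemma aestronglyMeasurable_qmul_comp {ψ : 𝕋 → H2 ℂ} (hψ : StronglyMeasurable ψ)
    (hG : ∀ t, Good (ψ t)) {g : 𝕋 → L2 ℂ} (hg : AEStronglyMeasurable g μT) :
    AEStronglyMeasurable (fun t => qmul ((ψ t : L2 ℂ)) (g t)) μT := by
  have hsm : StronglyMeasurable fun t => qmul ((ψ t : L2 ℂ)) (hg.mk g t) := by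
    have := hg.stronglyMeasurable_mk
    have happrox := this.approx
    refine stronglyMeasurable_of_tendsto Filter.atTop
      (fun n => stronglyMeasurable_qmul_simple hψ hG (this.approx n)) ?_
    exact tendsto_pi_nhds.mpr fun t => qmul_tendsto (hG t) (this.tendsto_approx t)
  refine ⟨_, hsm, ?_⟩
  filter_upwards [hg.ae_eq_mk] with t ht
  rw [ht]

end Aux5b

section Aux6

lemma ev2_def (f : L2 (H2 ℂ)) (t : 𝕋) (z : 𝕋) : ev2 f t z = ev ((f : 𝕋 → H2 ℂ) t) z := rfl

lemma mem_timesSet {φ h : L2 (H2 ℂ)} :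
    h ∈ timesSet φ ↔ ∃ g : L2 (H2 ℂ), ∀ᵐ t ∂μT, ∀ᵐ z ∂μT,
      ev2 h t z = ev2 φ t z * ev2 g t z := Iff.rfl

lemma timesSet_zero_mem (φ : L2 (H2 ℂ)) : (0 : L2 (H2 ℂ)) ∈ timesSet φ := by
  refine ⟨0, ?_⟩
  filter_upwards [Lp.coeFn_zero (H2 ℂ) 2 μT] with t ht
  have h0 : ((0 : L2 (H2 ℂ)) : 𝕋 → H2 ℂ) t = 0 := by rw [ht]; rfl
  filter_upwards [ev_zero] with z hz
  simp only [ev2_def]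
  rw [h0, hz, mul_zero]

lemma timesSet_add_mem (φ : L2 (H2 ℂ)) {a b : L2 (H2 ℂ)}
    (ha : a ∈ timesSet φ) (hb : b ∈ timesSet φ) : a + b ∈ timesSet φ := by
  obtain ⟨g1, hg1⟩ := ha
  obtain ⟨g2, hg2⟩ := hb
  refine ⟨g1 + g2, ?_⟩
  filter_upwards [hg1, hg2, Lp.coeFn_add a b, Lp.coeFn_add g1 g2] with t h1 h2 h3 h4
  have h3' : ((a + b : L2 (H2 ℂ)) : 𝕋 → H2 ℂ) t = (a : 𝕋 → H2 ℂ) t + (b : 𝕋 → H2 ℂ) t := by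
    rw [h3]; rfl
  have h4' : ((g1 + g2 : L2 (H2 ℂ)) : 𝕋 → H2 ℂ) t
      = (g1 : 𝕋 → H2 ℂ) t + (g2 : 𝕋 → H2 ℂ) t := by rw [h4]; rfl
  filter_upwards [h1, h2, ev_add ((a : 𝕋 → H2 ℂ) t) ((b : 𝕋 → H2 ℂ) t),
    ev_add ((g1 : 𝕋 → H2 ℂ) t) ((g2 : 𝕋 → H2 ℂ) t)] with z e1 e2 e3 e4
  simp only [ev2_def] at e1 e2 ⊢
  rw [h3', h4', e3, e4, e1, e2]
  ring

lemma timesSet_smul_mem (φ : L2 (H2 ℂ)) (c : ℂ) {a : L2 (H2 ℂ)}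
    (ha : a ∈ timesSet φ) : c • a ∈ timesSet φ := by
  obtain ⟨g, hg⟩ := ha
  refine ⟨c • g, ?_⟩
  filter_upwards [hg, Lp.coeFn_smul c a, Lp.coeFn_smul c g] with t h1 h2 h3
  have h2' : ((c • a : L2 (H2 ℂ)) : 𝕋 → H2 ℂ) t = c • (a : 𝕋 → H2 ℂ) t := by rw [h2]; rfl
  have h3' : ((c • g : L2 (H2 ℂ)) : 𝕋 → H2 ℂ) t = c • (g : 𝕋 → H2 ℂ) t := by rw [h3]; rfl
  filter_upwards [h1, ev_smul c ((a : 𝕋 → H2 ℂ) t), ev_smul c ((g : 𝕋 → H2 ℂ) t)]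
    with z e1 e2 e3
  simp only [ev2_def] at e1 ⊢
  rw [h2', h3', e2, e3, e1]
  ring

lemma timesSet_mulF (φ : L2 (H2 ℂ)) (m : ℤ) {h : L2 (H2 ℂ)}
    (hh : h ∈ timesSet φ) : mulF m h ∈ timesSet φ := by
  obtain ⟨g, hg⟩ := hh
  refine ⟨mulF m g, ?_⟩
  filter_upwards [hg, coeFn_mulF (E := H2 ℂ) m h, coeFn_mulF (E := H2 ℂ) m g] with t h1 h2 h3
  filter_upwards [h1, ev_smul (fourier m t) ((h : 𝕋 → H2 ℂ) t),
    ev_smul (fourier m t) ((g : 𝕋 → H2 ℂ) t)] with z e1 e2 e3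
  simp only [ev2_def] at e1 ⊢
  rw [h2, h3, e2, e3, e1]
  ring

end Aux6

section Aux7

lemma conj_mul_of_norm_one {a : ℂ} (ha : ‖a‖ = 1) (b : ℂ) :
    (starRingEnd ℂ) a * (a * b) = b := by
  have h1 : (starRingEnd ℂ) a * a = 1 := by
    rw [mul_comm, Complex.mul_conj]
    norm_cast
    rw [Complex.normSq_eq_norm_sq, ha, one_pow]
  rw [← mul_assoc, h1, one_mul]

lemma timesSet_eq_rangeSet (φ : L2 (H2 ℂ)) {ψ : 𝕋 → H2 ℂ} (hψ : StronglyMeasurable ψ)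
    (hG : ∀ t, Good (ψ t)) (hae : (φ : 𝕋 → H2 ℂ) =ᵐ[μT] ψ) :
    timesSet φ = rangeSet (fun t => mulSet (ψ t)) := by
  ext h
  constructor
  · rintro ⟨g, hg⟩
    show ∀ᵐ t ∂μT, (h : 𝕋 → H2 ℂ) t ∈ mulSet (ψ t)
    filter_upwards [hg, hae] with t hgt haet
    refine ⟨(g : 𝕋 → H2 ℂ) t, ?_⟩
    filter_upwards [hgt] with z hz
    simp only [ev2_def] at hz
    rw [hz, ← haet]
  · intro hmem
    have hmem' : ∀ᵐ t ∂μT, (h : 𝕋 → H2 ℂ) t ∈ mulSet (ψ t) := hmem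
    set q : 𝕋 → L2 ℂ := fun t => qmul ((ψ t : L2 ℂ)) (((h : 𝕋 → H2 ℂ) t : L2 ℂ)) with hq
    have hq_aesm : AEStronglyMeasurable q μT := by
      refine aestronglyMeasurable_qmul_comp hψ hG ?_
      exact continuous_subtype_val.comp_aestronglyMeasurable (Lp.aestronglyMeasurable h)
    set G' : 𝕋 → H2 ℂ := fun t => (orthogonalProjection (Hardy ℂ) (q t)) with hG'def
    have hG'_aesm : AEStronglyMeasurable G' μT :=
      (orthogonalProjection (Hardy ℂ)).continuous.comp_aestronglyMeasurable hq_aesm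
    have hG'_memLp : MemLp G' 2 μT := by
      refine MemLp.of_le (Lp.memLp h) hG'_aesm ?_
      refine Filter.Eventually.of_forall fun t => ?_
      calc ‖G' t‖ ≤ ‖orthogonalProjection (Hardy ℂ)‖ * ‖q t‖ :=
            (orthogonalProjection (Hardy ℂ)).le_opNorm (q t)
        _ ≤ 1 * ‖q t‖ :=
            mul_le_mul_of_nonneg_right (orthogonalProjection_norm_le _) (norm_nonneg _)
        _ = ‖q t‖ := one_mul _
        _ ≤ ‖(((h : 𝕋 → H2 ℂ) t : L2 ℂ))‖ := norm_qmul_le (hG t) _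
        _ = ‖(h : 𝕋 → H2 ℂ) t‖ := rfl
    refine ⟨hG'_memLp.toLp G', ?_⟩
    filter_upwards [hmem', hae, hG'_memLp.coeFn_toLp] with t hmt haet hGt
    rcases hG t with h0 | hw
    · have hh0 : (h : 𝕋 → H2 ℂ) t = 0 := by
        have h' := hmt
        rw [h0, mulSet_zero, Submodule.mem_bot] at h'
        exact h'
      filter_upwards [ev_zero] with z hz
      simp only [ev2_def]
      rw [hh0, haet, h0, hz, zero_mul]
    · obtain ⟨k, hk⟩ := hmt
      have hqk : qmul ((ψ t : L2 ℂ)) (((h : 𝕋 → H2 ℂ) t : L2 ℂ)) = (k : L2 ℂ) := by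
        refine qmul_eq ?_
        filter_upwards [hk, hw] with z hz1 hz2
        show ev k z = (starRingEnd ℂ) (ev (ψ t) z) * ev ((h : 𝕋 → H2 ℂ) t) z
        rw [hz1, conj_mul_of_norm_one hz2]
      have hGt' : (hG'_memLp.toLp G' : 𝕋 → H2 ℂ) t = k := by
        rw [hGt]
        show (orthogonalProjection (Hardy ℂ) (q t)) = k
        have : q t = (k : L2 ℂ) := hqk
        rw [this]
        exact orthogonalProjection_mem_subspace_eq_self k
      filter_upwards [hk] with z hz
      simp only [ev2_def]
      rw [hGt', haet]
      exact hz

end Aux7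

section Aux8

lemma isMeasRange_mulSet {ψ : 𝕋 → H2 ℂ} (hψ : StronglyMeasurable ψ)
    (hG : ∀ t, Good (ψ t)) : IsMeasRange (fun t => mulSet (ψ t)) := by
  constructor
  · exact fun t => isClosed_mulSet (hG t)
  · intro x y
    have heq : (fun t => (inner ℂ (projTo (mulSet (ψ t)) x) y : ℂ))
        = fun t => ∑' m : ℕ, (inner ℂ x (SmH m (ψ t)) * inner ℂ (SmH m (ψ t)) y : ℂ) := by
      funext t
      rw [projTo_inner_eq (hG t)]
      exact tsum_congr fun m => by rw [mulH_fem]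
    rw [heq]
    have hterm : ∀ m : ℕ,
        Measurable fun t => (inner ℂ x (SmH m (ψ t)) * inner ℂ (SmH m (ψ t)) y : ℂ) := by
      intro m
      have hc : Continuous fun w : H2 ℂ => (inner ℂ x (SmH m w) * inner ℂ (SmH m w) y : ℂ) :=
        (Continuous.inner continuous_const (SmH m).continuous).mul
          (Continuous.inner (SmH m).continuous continuous_const)
      exact (hc.comp_stronglyMeasurable hψ).measurable
    have hpartial : ∀ n : ℕ, Measurable fun t =>
        ∑ m ∈ Finset.range n, (inner ℂ x (SmH m (ψ t)) * inner ℂ (SmH m (ψ t)) y : ℂ) :=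
      fun n => Finset.measurable_sum _ fun m _ => hterm m
    refine measurable_of_tendsto_metrizable' Filter.atTop hpartial ?_
    rw [tendsto_pi_nhds]
    intro t
    have hsum : Summable fun m : ℕ => (inner ℂ x (SmH m (ψ t)) * inner ℂ (SmH m (ψ t)) y : ℂ) := by
      refine ((summable_proj_terms (hG t) x y).congr fun m => ?_)
      rw [mulH_fem]
    exact hsum.hasSum.tendsto_sum_nat

end Aux8

section Statements

theorem statement17 (φ : L2 (H2 ℂ))
    (hin : ∀ᵐ t ∂μT, (φ : 𝕋 → H2 ℂ) t ≠ 0 → IsInnerFn ((φ : 𝕋 → H2 ℂ) t)) :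
    ∃ M : Submodule ℂ (L2 (H2 ℂ)),
      (M : Set (L2 (H2 ℂ))) = timesSet φ ∧ IsClosed ((M : Set (L2 (H2 ℂ)))) ∧
      Reducing (F := L2 (H2 ℂ)) (mulF 1) M ∧
      ∃ J : 𝕋 → Submodule ℂ (H2 ℂ), IsMeasRange J ∧ (M : Set (L2 (H2 ℂ))) = rangeSet J ∧
        ∀ᵐ t ∂μT, J t = mulSet ((φ : 𝕋 → H2 ℂ) t) := by
  classical
  set ψ0 : 𝕋 → H2 ℂ := (Lp.aestronglyMeasurable φ).mk _ with hψ0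
  have hmk : (φ : 𝕋 → H2 ℂ) =ᵐ[μT] ψ0 := (Lp.aestronglyMeasurable φ).ae_eq_mk
  have hGae : ∀ᵐ t ∂μT, Good (ψ0 t) := by
    filter_upwards [hin, hmk] with t h1 h2
    by_cases h0 : ψ0 t = 0
    · exact Or.inl h0
    · right
      rw [← h2]
      exact h1 (by rw [h2]; exact h0)
  set S : Set 𝕋 := {t | ¬ Good (ψ0 t)} with hS
  have hSnull : μT S = 0 := ae_iff.mp hGae
  set N := toMeasurable μT S with hN
  have hNmeas : MeasurableSet N := measurableSet_toMeasurable μT S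
  have hNnull : μT N = 0 := by rw [hN, measure_toMeasurable]; exact hSnull
  set ψ : 𝕋 → H2 ℂ := N.piecewise (fun _ => 0) ψ0 with hψdef
  have hψ : StronglyMeasurable ψ :=
    StronglyMeasurable.piecewise hNmeas stronglyMeasurable_const
      ((Lp.aestronglyMeasurable φ).stronglyMeasurable_mk)
  have hGood : ∀ t, Good (ψ t) := by
    intro t
    by_cases ht : t ∈ N
    · left
      rw [hψdef]
      exact Set.piecewise_eq_of_mem _ _ _ ht
    · have hts : t ∉ S := fun hts' => ht (subset_toMeasurable μT S hts')
      have hg : Good (ψ0 t) := not_not.mp hts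
      rw [hψdef]
      rw [Set.piecewise_eq_of_notMem _ _ _ ht]
      exact hg
  have haeN : ∀ᵐ t ∂μT, t ∉ N := measure_eq_zero_iff_ae_notMem.mp hNnull
  have hae : (φ : 𝕋 → H2 ℂ) =ᵐ[μT] ψ := by
    filter_upwards [hmk, haeN] with t h1 h2
    rw [hψdef, Set.piecewise_eq_of_notMem _ _ _ h2]
    exact h1
  set J : 𝕋 → Submodule ℂ (H2 ℂ) := fun t => mulSet (ψ t) with hJdef
  set M : Submodule ℂ (L2 (H2 ℂ)) :=
    { carrier := timesSet φ
      zero_mem' := timesSet_zero_mem φ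
      add_mem' := fun ha hb => timesSet_add_mem φ ha hb
      smul_mem' := fun c {a} ha => timesSet_smul_mem φ c ha } with hM
  have hMset : (M : Set (L2 (H2 ℂ))) = timesSet φ := rfl
  have hMrange : (M : Set (L2 (H2 ℂ))) = rangeSet J := by
    rw [hMset]
    exact timesSet_eq_rangeSet φ hψ hGood hae
  refine ⟨M, rfl, ?_, ?_, J, isMeasRange_mulSet hψ hGood, hMrange, ?_⟩
  · rw [hMrange]
    exact isClosed_rangeSet (fun t => isClosed_mulSet (hGood t))
  · constructor
    · exact fun f hf => timesSet_mulF φ 1 hf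
    · intro f hf
      rw [Submodule.mem_orthogonal] at hf ⊢
      intro u hu
      have h1 : (inner ℂ (mulF (-1 : ℤ) u) f : ℂ) = 0 := hf _ (timesSet_mulF φ (-1) hu)
      have h2 := inner_mulF (H2 ℂ) (-1 : ℤ) u f
      rw [neg_neg] at h2
      rw [← h2]
      exact h1
  · filter_upwards [hae] with t ht
    show mulSet (ψ t) = mulSet ((φ : 𝕋 → H2 ℂ) t)
    rw [ht]


end Statements

end ShiftPaper
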